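/- arXiv:2401.12934 — 2 statements merged into one kernel-verified Lean document; each statement's English description precedes it below -/
import Mathlib

section
/- Parameter error bound for restricted OLS with omitted variables: if Y = X θ* + ε with θ* supported on ρ ⊆ I, the restricted OLS estimator θ̂_I = (X_Iᵀ X_I)^{-1} X_Iᵀ Y satisfies ‖θ̂_I − θ*_I‖₂ ≤ (√|I| / Λ_min(|I|)) · λ, provided ‖X_Iᵀ ε / n‖_∞ ≤ λ and the restricted minimal eigenvalue Λ_min(|I|) = min_{v≠0, ‖v‖₀≤|I|} ‖Xv‖₂²/(n‖v‖₂²) is positive. -/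
open Matrix Finset

/-- Parameter error bound for restricted OLS with a superset `I` of the true support:
if `Y = Xθ* + ε`, `θ*` is supported on `ρ ⊆ I`, the restricted OLS estimator `θ̂_I`
solves the normal equations on the columns `I`, the maximal correlation of noise with
the columns in `I` is at most `nλ`, and the restricted minimal eigenvalue over
`|I|`-sparse vectors is `Λmin > 0`, then `‖θ̂_I − θ*_I‖₂ ≤ √|I| · λ / Λmin`. -/
theorem restricted_ols_parameter_error
    {n d : ℕ} (hn : 0 < n)
    (X : Matrix (Fin n) (Fin d) ℝ) (ε Y : Fin n → ℝ)
    (θstar : Fin d → ℝ) (ρ I : Finset (Fin d))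
    (lam Λmin : ℝ)
    (hY : Y = X.mulVec θstar + ε)
    (hρI : ρ ⊆ I)
    (hsupp : ∀ j ∉ ρ, θstar j = 0)
    (θhat : {j // j ∈ I} → ℝ)
    (hnormal :
      ((X.submatrix id (Subtype.val : {j // j ∈ I} → Fin d)).transpose
          * (X.submatrix id (Subtype.val : {j // j ∈ I} → Fin d))).mulVec θhat
        = (X.submatrix id (Subtype.val : {j // j ∈ I} → Fin d)).transpose.mulVec Y)
    (hnoise : ∀ j ∈ I, |(∑ i, X i j * ε i) / n| ≤ lam)
    (hΛpos : 0 < Λmin)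
    (hΛ : ∀ v : Fin d → ℝ,
      (Finset.univ.filter (fun j => v j ≠ 0)).card ≤ I.card →
      Λmin * (n * ∑ j, (v j) ^ 2) ≤ ∑ i, (X.mulVec v i) ^ 2) :
    Real.sqrt (∑ j : {j // j ∈ I}, (θhat j - θstar j.val) ^ 2)
      ≤ Real.sqrt I.card / Λmin * lam := by
  classical
  rcases I.eq_empty_or_nonempty with hIe | hIne
  · subst hIe
    simp
  have hlam : 0 ≤ lam := by
    obtain ⟨j, hj⟩ := hIne
    exact (abs_nonneg _).trans (hnoise j hj)
  set M := X.submatrix id (Subtype.val : {j // j ∈ I} → Fin d) with hMdef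
  set δ : {j // j ∈ I} → ℝ := fun j => θhat j - θstar j.val with hδdef
  -- sums over Fin d of functions vanishing off I
  have hsum : ∀ (g : Fin d → ℝ), (∀ j ∉ I, g j = 0) →
      ∑ j, g j = ∑ j : {j // j ∈ I}, g j.val := by
    intro g hg
    rw [Finset.sum_coe_sort I g]
    exact (Finset.sum_subset (Finset.subset_univ I)
      (fun x _ hx => hg x hx)).symm
  have hX0 : ∀ j ∉ I, θstar j = 0 := fun j hj => hsupp j (fun h => hj (hρI h))
  have hrestr : ∀ (w : Fin d → ℝ), (∀ j ∉ I, w j = 0) →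
      X.mulVec w = M.mulVec (fun j : {j // j ∈ I} => w j.val) := by
    intro w hw
    funext i
    simp only [Matrix.mulVec, dotProduct, hMdef, Matrix.submatrix_apply, id]
    exact hsum (fun j => X i j * w j) (fun j hj => by simp [hw j hj])
  set θI : {j // j ∈ I} → ℝ := fun j => θstar j.val with hθIdef
  have hXθ : X.mulVec θstar = M.mulVec θI := hrestr θstar hX0
  -- v : extension of δ by zeros
  set v : Fin d → ℝ := fun j => if h : j ∈ I then δ ⟨j, h⟩ else 0 with hvdef
  have hv0 : ∀ j ∉ I, v j = 0 := fun j hj => dif_neg hj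
  have hvval : ∀ j : {j // j ∈ I}, v j.val = δ j := by
    intro j; simp [hvdef]
  have hXv : X.mulVec v = M.mulVec δ := by
    have hveq : (fun j : {j // j ∈ I} => v j.val) = δ := funext hvval
    rw [hrestr v hv0, hveq]
  have hvsq : ∑ j, v j ^ 2 = ∑ j : {j // j ∈ I}, δ j ^ 2 := by
    rw [hsum (fun j => v j ^ 2) (fun j hj => by simp [hv0 j hj])]
    exact Finset.sum_congr rfl fun j _ => by rw [hvval j]
  -- normal equation in increment form
  have hδeq : δ = θhat - θI := by funext j; simp [hδdef, hθIdef]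
  have hE : (Mᵀ * M).mulVec δ = Mᵀ.mulVec ε := by
    have h1 : (Mᵀ * M).mulVec θhat = (Mᵀ * M).mulVec θI + Mᵀ.mulVec ε := by
      rw [hnormal, hY, Matrix.mulVec_add, hXθ, Matrix.mulVec_mulVec]
    rw [hδeq, Matrix.mulVec_sub, h1]
    abel
  -- key identity : ‖Mδ‖² = δ ⬝ Mᵀε
  have hkey : ∑ i, (M.mulVec δ i) ^ 2
      = ∑ j : {j // j ∈ I}, δ j * (∑ i, X i j.val * ε i) := by
    have h2 : δ ⬝ᵥ (Mᵀ * M).mulVec δ = δ ⬝ᵥ Mᵀ.mulVec ε := by rw [hE]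
    have hL : δ ⬝ᵥ (Mᵀ * M).mulVec δ = ∑ i, (M.mulVec δ i) ^ 2 := by
      rw [← Matrix.mulVec_mulVec, Matrix.dotProduct_mulVec, Matrix.vecMul_transpose]
      simp only [dotProduct]
      exact Finset.sum_congr rfl fun i _ => (sq (M.mulVec δ i)).symm
    have hR : δ ⬝ᵥ Mᵀ.mulVec ε
        = ∑ j : {j // j ∈ I}, δ j * (∑ i, X i j.val * ε i) := by
      simp only [dotProduct, Matrix.mulVec, Matrix.transpose_apply, hMdef,
        Matrix.submatrix_apply, id]
    rw [← hL, h2, hR]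
  -- bound each correlation
  have hcorr : ∀ j : {j // j ∈ I}, |∑ i, X i j.val * ε i| ≤ n * lam := by
    intro j
    have h := hnoise j.val j.2
    rw [abs_div] at h
    have hn' : (0:ℝ) < n := by exact_mod_cast hn
    rw [div_le_iff₀ (by simpa using hn')] at h
    · calc |∑ i, X i j.val * ε i| ≤ lam * |(n:ℝ)| := h
        _ = n * lam := by rw [abs_of_pos hn']; ring
  set S2 : ℝ := ∑ j : {j // j ∈ I}, δ j ^ 2 with hS2def
  have hS2nonneg : 0 ≤ S2 := Finset.sum_nonneg fun j _ => sq_nonneg _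
  set S : ℝ := Real.sqrt S2 with hSdef
  have hSsq : S ^ 2 = S2 := Real.sq_sqrt hS2nonneg
  -- Cauchy-Schwarz : ∑ |δ j| ≤ √card * S
  have hcs : ∑ j : {j // j ∈ I}, |δ j| ≤ Real.sqrt I.card * S := by
    have h := Real.sum_mul_le_sqrt_mul_sqrt (Finset.univ : Finset {j // j ∈ I})
      (fun _ => (1:ℝ)) (fun j => |δ j|)
    simp only [one_mul, one_pow, sq_abs] at h
    have hcard : ∑ _j : {j // j ∈ I}, (1:ℝ) = (I.card : ℝ) := by
      simp [Fintype.card_coe]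
    calc ∑ j : {j // j ∈ I}, |δ j| ≤ Real.sqrt (∑ _j : {j // j ∈ I}, (1:ℝ)) *
          Real.sqrt (∑ j : {j // j ∈ I}, δ j ^ 2) := by
          simpa using h
      _ = Real.sqrt I.card * S := by rw [hcard, hSdef, hS2def]
  -- the chain of inequalities
  have hsuppv : (Finset.univ.filter (fun j => v j ≠ 0)).card ≤ I.card := by
    apply Finset.card_le_card
    intro j hj
    simp only [Finset.mem_filter] at hj
    by_contra hjI
    exact hj.2 (hv0 j hjI)
  have hchain : Λmin * (n * S2) ≤ n * lam * (Real.sqrt I.card * S) := by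
    have h1 := hΛ v hsuppv
    rw [hvsq] at h1
    have h2 : ∑ i, (X.mulVec v i) ^ 2 = ∑ i, (M.mulVec δ i) ^ 2 := by rw [hXv]
    have h3 : ∑ j : {j // j ∈ I}, δ j * (∑ i, X i j.val * ε i)
        ≤ n * lam * (Real.sqrt I.card * S) := by
      calc ∑ j : {j // j ∈ I}, δ j * (∑ i, X i j.val * ε i)
          ≤ ∑ j : {j // j ∈ I}, |δ j| * (n * lam) := by
            apply Finset.sum_le_sum
            intro j _
            calc δ j * (∑ i, X i j.val * ε i) ≤ |δ j * (∑ i, X i j.val * ε i)| :=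
                  le_abs_self _
              _ = |δ j| * |∑ i, X i j.val * ε i| := abs_mul _ _
              _ ≤ |δ j| * (n * lam) := by
                  exact mul_le_mul_of_nonneg_left (hcorr j) (abs_nonneg _)
        _ = (∑ j : {j // j ∈ I}, |δ j|) * (n * lam) := by rw [Finset.sum_mul]
        _ ≤ (Real.sqrt I.card * S) * (n * lam) := by
            apply mul_le_mul_of_nonneg_right hcs
            positivity
        _ = n * lam * (Real.sqrt I.card * S) := by ring
    calc Λmin * (n * S2) ≤ ∑ i, (X.mulVec v i) ^ 2 := h1
      _ = ∑ i, (M.mulVec δ i) ^ 2 := h2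
      _ = ∑ j : {j // j ∈ I}, δ j * (∑ i, X i j.val * ε i) := hkey
      _ ≤ n * lam * (Real.sqrt I.card * S) := h3
  -- conclude
  show S ≤ Real.sqrt I.card / Λmin * lam
  have hn' : (0:ℝ) < n := by exact_mod_cast hn
  rcases eq_or_lt_of_le (Real.sqrt_nonneg S2) with hS0 | hSpos
  · rw [hSdef, ← hS0]
    positivity
  · rw [← hSsq] at hchain
    have hfinal : Λmin * S ≤ lam * Real.sqrt I.card := by
      nlinarith [mul_pos hn' hSpos]
    rw [div_mul_eq_mul_div, le_div_iff₀ hΛpos]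
    nlinarith [hfinal]
end

section
/- For a deterministic greedy policy derived from a coordinate-sparse q-function, the Bellman backup integrates out exogenous coordinates: if q_{t+1}(s,a) depends only on s^ρ, a* (s) = arg max_a q_{t+1}(s,a) depends only on s^ρ, and s_{t+1}^ρ ⊥ s_t^{ρc} | (s_t^ρ, a_t), then E[q_{t+1}(s_{t+1}, a*(s_{t+1})) | s_t, a_t] = E[q_{t+1}(s_{t+1}^ρ, a*(s_{t+1}^ρ)) | s_t^ρ, a_t], i.e., the backup is itself a function only of (s_t^ρ, a_t). -/
open MeasureTheory

/-- For a greedy policy derived from a `ρ`-sparse q-function, the Bellman backup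
integrates out the exogenous coordinates: if `q` and its greedy action `a*` depend only
on the `ρ`-coordinates of the state and the next-state `ρ`-coordinates are conditionally
independent of the current non-`ρ` coordinates given the current `ρ`-coordinates and the
action, then `E[q(s', a*(s')) | s, a]` depends only on `(s^ρ, a)`. -/
theorem sparse_greedy_backup_depends_only_on_sparse_coords
    {d : ℕ} {A : Type*}
    (ρ : Finset (Fin d))
    (P : (Fin d → ℝ) → A → Measure (Fin d → ℝ))
    (q : (Fin d → ℝ) → A → ℝ)
    (astar : (Fin d → ℝ) → A)
    (hq : ∀ (x y : Fin d → ℝ) (a : A), (∀ i ∈ ρ, x i = y i) → q x a = q y a)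
    (hastar_max : ∀ (x : Fin d → ℝ) (b : A), q x b ≤ q x (astar x))
    (hastar_sparse : ∀ x y : Fin d → ℝ, (∀ i ∈ ρ, x i = y i) → astar x = astar y)
    (hmeas : Measurable (fun x : Fin d → ℝ => q x (astar x)))
    (hP : ∀ (s s' : Fin d → ℝ) (a : A), (∀ i ∈ ρ, s i = s' i) →
      (P s a).map (fun x i => if i ∈ ρ then x i else 0)
        = (P s' a).map (fun x i => if i ∈ ρ then x i else 0)) :
    ∀ (s s' : Fin d → ℝ) (a : A), (∀ i ∈ ρ, s i = s' i) →
      (∫ x, q x (astar x) ∂ (P s a)) = ∫ x, q x (astar x) ∂ (P s' a) := by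
  intro s s' a hss
  set π : (Fin d → ℝ) → (Fin d → ℝ) := fun x i => if i ∈ ρ then x i else 0 with hπ
  have hπmeas : Measurable π := by
    apply measurable_pi_lambda
    intro i
    by_cases hi : i ∈ ρ <;> simp [hπ, hi]
    · exact measurable_pi_apply i
  have hagree : ∀ x : Fin d → ℝ, ∀ i ∈ ρ, x i = π x i := by
    intro x i hi; simp [hπ, hi]
  have hfactor : ∀ x : Fin d → ℝ, q x (astar x) = q (π x) (astar (π x)) := by
    intro x
    rw [hastar_sparse x (π x) (hagree x), hq x (π x) _ (hagree x)]
  have key : ∀ t : Fin d → ℝ,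
      (∫ x, q x (astar x) ∂ (P t a)) = ∫ y, q y (astar y) ∂ ((P t a).map π) := by
    intro t
    rw [integral_map hπmeas.aemeasurable hmeas.aestronglyMeasurable]
    exact integral_congr_ae (Filter.Eventually.of_forall hfactor)
  rw [key s, key s', hP s s' a hss]
end
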